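/- Let J ≥ 1 and let x_1,…,x_J be real numbers with x_i ≥ 1 for all i. Then the sign of det A_J^−(x_1,…,x_J) equals (−1)^J, i.e. (−1)^J·det A_J^−(x_1,…,x_J) > 0. (Lemma 7.7(d)) -/

import Mathlib

open Finset Matrix

/-- The `J × J` real symmetric matrix `A_J^ε(x₁, …, x_J)` (vertices `0`-indexed):
`A_J^ε = -2 ∑ᵢ xᵢ E_{i,i} + ∑_{i=1}^{J-1} (E_{i,i+1} + E_{i+1,i}) + ε (E_{1,J} + E_{J,1})`. -/
def matA (J : ℕ) (ε : ℝ) (x : ℕ → ℝ) : Matrix (Fin J) (Fin J) ℝ :=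
  Matrix.of fun i j =>
    (if (i : ℕ) = (j : ℕ) then -2 * x (i : ℕ) else 0)
    + (if (i : ℕ) + 1 = (j : ℕ) ∨ (j : ℕ) + 1 = (i : ℕ) then 1 else 0)
    + (if (i : ℕ) = 0 ∧ (j : ℕ) = J - 1 then ε else 0)
    + (if (j : ℕ) = 0 ∧ (i : ℕ) = J - 1 then ε else 0)

/-- ℕ-indexed entry function for `-(matA (n+1) (-1) x)`. -/
noncomputable def entN (n : ℕ) (x : ℕ → ℝ) (a b : ℕ) : ℝ :=
  -((if a = b then -2 * x a else 0)
    + (if a + 1 = b ∨ b + 1 = a then (1:ℝ) else 0)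
    + (if a = 0 ∧ b = n then (-1:ℝ) else 0)
    + (if b = 0 ∧ a = n then (-1:ℝ) else 0))

lemma matA_neg_apply (n : ℕ) (x : ℕ → ℝ) (j k : Fin (n+1)) :
    (-(matA (n+1) (-1) x)) j k = entN n x (j : ℕ) (k : ℕ) := rfl

lemma entN_eq (n : ℕ) (x : ℕ → ℝ) (a b : ℕ) :
    entN n x a b =
      (if a = b then 2 * x a else 0)
      + (if a + 1 = b then (-1:ℝ) else 0)
      + (if b + 1 = a then (-1:ℝ) else 0)
      + (if a = 0 ∧ b = n then (1:ℝ) else 0)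
      + (if b = 0 ∧ a = n then (1:ℝ) else 0) := by
  unfold entN
  split_ifs <;> first | ring1 | (exfalso; omega)

lemma matA_isHerm (J : ℕ) (ε : ℝ) (x : ℕ → ℝ) : (matA J ε x).IsHermitian := by
  rw [Matrix.IsHermitian]
  ext i j
  simp only [Matrix.conjTranspose_apply, matA, Matrix.of_apply, star_trivial]
  have h1 : (if (j:ℕ) = (i:ℕ) then -2 * x (j:ℕ) else 0)
      = (if (i:ℕ) = (j:ℕ) then -2 * x (i:ℕ) else 0) := by
    rcases eq_or_ne (i:ℕ) (j:ℕ) with h | h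
    · simp [h]
    · simp [h, Ne.symm h]
  rw [h1, if_congr (or_comm) rfl rfl]
  ring

lemma quadform (n : ℕ) (x : ℕ → ℝ) (v : Fin (n+1) → ℝ) (w : ℕ → ℝ)
    (hw : ∀ j : Fin (n+1), w (j : ℕ) = v j) :
    v ⬝ᵥ (-(matA (n+1) (-1) x)) *ᵥ v
      = (∑ a ∈ range n, (w a - w (a+1))^2) + (w 0 + w n)^2
        + 2 * ∑ a ∈ range (n+1), (x a - 1) * w a ^ 2 := by
  have h1 : v ⬝ᵥ (-(matA (n+1) (-1) x)) *ᵥ v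
      = ∑ a ∈ range (n+1), ∑ b ∈ range (n+1), w a * (entN n x a b * w b) := by
    simp only [dotProduct, Matrix.mulVec]
    rw [← Fin.sum_univ_eq_sum_range
      (fun a => ∑ b ∈ range (n+1), w a * (entN n x a b * w b)) (n+1)]
    refine Finset.sum_congr rfl fun j _ => ?_
    rw [← Fin.sum_univ_eq_sum_range (fun b => w (j:ℕ) * (entN n x (j:ℕ) b * w b)) (n+1)]
    rw [Finset.mul_sum]
    refine Finset.sum_congr rfl fun k _ => ?_
    rw [matA_neg_apply, hw, hw]
  rw [h1]
  have hsplit : ∀ a b : ℕ, w a * (entN n x a b * w b)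
      = (if a = b then w a * (2 * x a * w b) else 0)
        + (if a + 1 = b then -(w a * w b) else 0)
        + (if b + 1 = a then -(w a * w b) else 0)
        + (if a = 0 ∧ b = n then w a * w b else 0)
        + (if b = 0 ∧ a = n then w a * w b else 0) := by
    intro a b
    rw [entN_eq]
    split_ifs <;> ring
  simp only [hsplit, Finset.sum_add_distrib]
  have hD1 : ∑ a ∈ range (n+1), ∑ b ∈ range (n+1),
      (if a = b then w a * (2 * x a * w b) else 0) = ∑ a ∈ range (n+1), 2 * x a * w a ^ 2 := by
    refine Finset.sum_congr rfl fun a ha => ?_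
    rw [Finset.sum_ite_eq, if_pos ha]
    ring
  have hD2 : ∑ a ∈ range (n+1), ∑ b ∈ range (n+1),
      (if a + 1 = b then -(w a * w b) else 0) = -∑ a ∈ range n, w a * w (a+1) := by
    have : ∀ a ∈ range (n+1), ∑ b ∈ range (n+1), (if a + 1 = b then -(w a * w b) else 0)
        = if a ∈ range n then -(w a * w (a+1)) else 0 := by
      intro a _
      rw [Finset.sum_ite_eq]
      simp only [Finset.mem_range]
      exact if_congr (by omega) rfl rfl
    rw [Finset.sum_congr rfl this, Finset.sum_ite_mem,
      Finset.inter_eq_right.mpr (Finset.range_subset_range.mpr (by omega)), ← Finset.sum_neg_distrib]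
  have hD3 : ∑ a ∈ range (n+1), ∑ b ∈ range (n+1),
      (if b + 1 = a then -(w a * w b) else 0) = -∑ a ∈ range n, w a * w (a+1) := by
    rw [Finset.sum_comm]
    have : ∀ b ∈ range (n+1), ∑ a ∈ range (n+1), (if b + 1 = a then -(w a * w b) else 0)
        = if b ∈ range n then -(w b * w (b+1)) else 0 := by
      intro b _
      rw [Finset.sum_ite_eq]
      simp only [Finset.mem_range]
      rcases Nat.lt_or_ge (b+1) (n+1) with h | h
      · rw [if_pos h, if_pos (by omega)]; ring
      · rw [if_neg (by omega), if_neg (by omega)]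
    rw [Finset.sum_congr rfl this, Finset.sum_ite_mem,
      Finset.inter_eq_right.mpr (Finset.range_subset_range.mpr (by omega)), ← Finset.sum_neg_distrib]
  have hD4 : ∑ a ∈ range (n+1), ∑ b ∈ range (n+1),
      (if a = 0 ∧ b = n then w a * w b else 0) = w 0 * w n := by
    have : ∀ a ∈ range (n+1), ∑ b ∈ range (n+1), (if a = 0 ∧ b = n then w a * w b else 0)
        = if a = 0 then w a * w n else 0 := by
      intro a _
      have : ∀ b, (if a = 0 ∧ b = n then w a * w b else 0)
          = if b = n then (if a = 0 then w a * w b else 0) else 0 := by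
        intro b; split_ifs <;> tauto
      rw [Finset.sum_congr rfl fun b _ => this b, Finset.sum_ite_eq',
        if_pos (Finset.mem_range.mpr (by omega))]
    rw [Finset.sum_congr rfl this, Finset.sum_ite_eq', if_pos (Finset.mem_range.mpr (by omega))]
  have hD5 : ∑ a ∈ range (n+1), ∑ b ∈ range (n+1),
      (if b = 0 ∧ a = n then w a * w b else 0) = w 0 * w n := by
    have : ∀ a ∈ range (n+1), ∑ b ∈ range (n+1), (if b = 0 ∧ a = n then w a * w b else 0)
        = if a = n then w a * w 0 else 0 := by
      intro a _
      have : ∀ b, (if b = 0 ∧ a = n then w a * w b else 0)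
          = if b = 0 then (if a = n then w a * w b else 0) else 0 := by
        intro b; split_ifs <;> tauto
      rw [Finset.sum_congr rfl fun b _ => this b, Finset.sum_ite_eq',
        if_pos (Finset.mem_range.mpr (by omega))]
    rw [Finset.sum_congr rfl this, Finset.sum_ite_eq', if_pos (Finset.mem_range.mpr (by omega))]
    ring
  rw [hD1, hD2, hD3, hD4, hD5]
  -- final algebraic identity
  have eA : ∑ a ∈ range n, (w a - w (a+1))^2
      = ∑ a ∈ range n, (w a)^2 - 2 * ∑ a ∈ range n, w a * w (a+1)
        + ∑ a ∈ range n, (w (a+1))^2 := by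
    rw [Finset.mul_sum, ← Finset.sum_sub_distrib, ← Finset.sum_add_distrib]
    refine Finset.sum_congr rfl fun a _ => ?_
    ring
  have eB : ∑ a ∈ range (n+1), (w a)^2 = ∑ a ∈ range n, (w a)^2 + (w n)^2 :=
    Finset.sum_range_succ _ n
  have eC : ∑ a ∈ range (n+1), (w a)^2 = ∑ a ∈ range n, (w (a+1))^2 + (w 0)^2 :=
    Finset.sum_range_succ' _ n
  have eD : ∑ a ∈ range (n+1), 2 * x a * w a ^ 2
      = 2 * ∑ a ∈ range (n+1), (x a - 1) * w a ^ 2 + 2 * ∑ a ∈ range (n+1), (w a)^2 := by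
    rw [Finset.mul_sum, Finset.mul_sum, ← Finset.sum_add_distrib]
    refine Finset.sum_congr rfl fun a _ => ?_
    ring
  rw [eA, eD]
  linear_combination eB + eC

theorem detA_neg_sign (J : ℕ) (hJ : 1 ≤ J) (x : ℕ → ℝ)
    (hx : ∀ i < J, 1 ≤ x i) :
    0 < (-1 : ℝ) ^ J * (matA J (-1) x).det := by
  obtain ⟨n, rfl⟩ : ∃ n, J = n + 1 := ⟨J - 1, (Nat.succ_pred_eq_of_pos hJ).symm⟩
  have hpd : (-(matA (n+1) (-1) x)).PosDef := by
    refine Matrix.PosDef.of_dotProduct_mulVec_pos (matA_isHerm (n+1) (-1) x).neg fun v hv => ?_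
    have star_v : star v = v := star_trivial v
    rw [star_v]
    set w : ℕ → ℝ := fun a => if h : a < n+1 then v ⟨a, h⟩ else 0 with hwdef
    have hw : ∀ j : Fin (n+1), w (j : ℕ) = v j := by
      intro j
      simp only [hwdef, j.isLt, dif_pos, Fin.eta]
    rw [quadform n x v w hw]
    have h3 : 0 ≤ 2 * ∑ a ∈ range (n+1), (x a - 1) * w a ^ 2 := by
      have : 0 ≤ ∑ a ∈ range (n+1), (x a - 1) * w a ^ 2 := by
        refine Finset.sum_nonneg fun a ha => ?_
        have := hx a (Finset.mem_range.mp ha)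
        have := sq_nonneg (w a)
        nlinarith
      linarith
    have h1 : 0 ≤ ∑ a ∈ range n, (w a - w (a+1))^2 :=
      Finset.sum_nonneg fun a _ => sq_nonneg _
    have key : 0 < (∑ a ∈ range n, (w a - w (a+1))^2) + (w 0 + w n)^2 := by
      by_contra hcon
      push_neg at hcon
      have hs0 : ∑ a ∈ range n, (w a - w (a+1))^2 = 0 := by
        nlinarith [sq_nonneg (w 0 + w n)]
      have h0n : w 0 + w n = 0 := by
        nlinarith [sq_nonneg (w 0 + w n)]
      have hstep : ∀ a < n, w a = w (a+1) := by
        intro a ha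
        have := (Finset.sum_eq_zero_iff_of_nonneg
          (fun a _ => sq_nonneg (w a - w (a+1)))).mp hs0 a (Finset.mem_range.mpr ha)
        have := pow_eq_zero_iff (n := 2) (by norm_num) |>.mp this
        linarith [sub_eq_zero.mp this]
      have hconst : ∀ a, a ≤ n → w a = w 0 := by
        intro a
        induction a with
        | zero => intro _; rfl
        | succ m ih =>
          intro hm
          rw [← hstep m (by omega)]
          exact ih (by omega)
      have hw0 : w 0 = 0 := by
        have := hconst n le_rfl
        linarith
      apply hv
      funext j
      rw [← hw j, hconst (j : ℕ) (by omega), hw0, Pi.zero_apply]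
    linarith
  have hdet := hpd.det_pos
  rwa [Matrix.det_neg, Fintype.card_fin] at hdet
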